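/- For every integer d ≥ 1, ∫₀^d h_d(s)^d ds ≤ 6, where h_d(s) = (1 + e^{-2s/d})(1 + e^{-2(d-s)/d})/(2(1+e^{-2})). -/

import Mathlib

open Real

private lemma exp_conv (a b t : ℝ) (h0 : 0 ≤ t) (h1 : t ≤ 1) :
    Real.exp ((1 - t) * a + t * b) ≤ (1 - t) * Real.exp a + t * Real.exp b := by
  have := convexOn_exp.2 (Set.mem_univ a) (Set.mem_univ b) (by linarith : (0:ℝ) ≤ 1 - t) h0
    (by ring)
  simpa [smul_eq_mul] using this

private lemma keyA (x : ℝ) (hx0 : 0 ≤ x) (hx : x ≤ 1/2) :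
    (1 + Real.exp (-2 * x)) * (1 + Real.exp (-2 + 2 * x))
      ≤ 2 * (1 + Real.exp (-2)) * (1 - x / 3) := by
  set t := 2 * x with ht
  have h0 : 0 ≤ t := by positivity
  have h1 : t ≤ 1 := by simp [ht]; linarith
  have hA : Real.exp (-2 * x) ≤ (1 - t) * Real.exp 0 + t * Real.exp (-1) := by
    have := exp_conv 0 (-1) t h0 h1
    have e : (1 - t) * (0:ℝ) + t * (-1) = -2 * x := by rw [ht]; ring
    rwa [e] at this
  have hB : Real.exp (-2 + 2 * x) ≤ (1 - t) * Real.exp (-2) + t * Real.exp (-1) := by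
    have := exp_conv (-2) (-1) t h0 h1
    have e : (1 - t) * (-2:ℝ) + t * (-1) = -2 + 2 * x := by rw [ht]; ring
    rwa [e] at this
  have hprod : Real.exp (-2 * x) * Real.exp (-2 + 2 * x) = Real.exp (-2) := by
    have e : (-2 * x) + (-2 + 2 * x) = (-2 : ℝ) := by ring
    rw [← Real.exp_add, e]
  -- numeric fact: 3 * exp (-1) ≤ 1 + exp (-2)
  have hE1 : Real.exp (-1) * Real.exp 1 = 1 := by
    have e : (-1 : ℝ) + 1 = 0 := by ring
    rw [← Real.exp_add, e, Real.exp_zero]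
  have hnum : 3 * Real.exp (-1) ≤ 1 + Real.exp (-2) := by
    have h2 : Real.exp (-2) = Real.exp (-1) * Real.exp (-1) := by
      rw [← Real.exp_add]; norm_num
    have hgt := Real.exp_one_gt_d9
    have hpos : 0 < Real.exp (-1) := Real.exp_pos _
    nlinarith [hpos, hgt, hE1]
  have expand : (1 + Real.exp (-2 * x)) * (1 + Real.exp (-2 + 2 * x))
      = 1 + Real.exp (-2) + Real.exp (-2 * x) + Real.exp (-2 + 2 * x) := by
    have : (1 + Real.exp (-2 * x)) * (1 + Real.exp (-2 + 2 * x))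
        = 1 + Real.exp (-2 * x) * Real.exp (-2 + 2 * x)
          + Real.exp (-2 * x) + Real.exp (-2 + 2 * x) := by ring
    rw [this, hprod]
  rw [expand]
  have h0' : Real.exp 0 = 1 := Real.exp_zero
  rw [h0'] at hA
  -- goal: 1 + E2 + A + B ≤ 2(1+E2)(1 - x/3);  x/3 = t/6
  nlinarith [hA, hB, hnum, h0, Real.exp_pos (-2),
    mul_nonneg h0 (by linarith : (0:ℝ) ≤ 1 + Real.exp (-2) - 3 * Real.exp (-1))]

private lemma hbound (d : ℕ) (hd : 1 ≤ d) (s : ℝ) (hs0 : 0 ≤ s) (hs : s ≤ (d : ℝ) / 2) :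
    ((1 + Real.exp (-2 * s / d)) * (1 + Real.exp (-2 * ((d : ℝ) - s) / d))
        / (2 * (1 + Real.exp (-2)))) ^ d ≤ Real.exp (-s / 3) := by
  have hD : (0:ℝ) < d := by exact_mod_cast hd
  set x := s / (d : ℝ) with hx
  have hx0 : 0 ≤ x := by positivity
  have hx12 : x ≤ 1 / 2 := by
    rw [hx, div_le_div_iff₀ hD (by norm_num)]
    linarith
  have e1 : -2 * s / (d : ℝ) = -2 * x := by rw [hx]; ring
  have e2 : -2 * ((d : ℝ) - s) / d = -2 + 2 * x := by
    rw [hx]; field_simp; ring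
  rw [e1, e2]
  have hpos : (0:ℝ) < 2 * (1 + Real.exp (-2)) := by positivity
  have hle : (1 + Real.exp (-2 * x)) * (1 + Real.exp (-2 + 2 * x))
      / (2 * (1 + Real.exp (-2))) ≤ 1 - x / 3 := by
    rw [div_le_iff₀ hpos]
    calc (1 + Real.exp (-2 * x)) * (1 + Real.exp (-2 + 2 * x))
        ≤ 2 * (1 + Real.exp (-2)) * (1 - x / 3) := keyA x hx0 hx12
      _ = (1 - x / 3) * (2 * (1 + Real.exp (-2))) := by ring
  have hnn : 0 ≤ (1 + Real.exp (-2 * x)) * (1 + Real.exp (-2 + 2 * x))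
      / (2 * (1 + Real.exp (-2))) := by positivity
  have hle2 : (1 + Real.exp (-2 * x)) * (1 + Real.exp (-2 + 2 * x))
      / (2 * (1 + Real.exp (-2))) ≤ Real.exp (-x / 3) := by
    refine hle.trans ?_
    have := Real.add_one_le_exp (-x / 3)
    linarith
  calc ((1 + Real.exp (-2 * x)) * (1 + Real.exp (-2 + 2 * x))
        / (2 * (1 + Real.exp (-2)))) ^ d
      ≤ Real.exp (-x / 3) ^ d := pow_le_pow_left₀ hnn hle2 d
    _ = Real.exp ((d : ℝ) * (-x / 3)) := by rw [← Real.exp_nat_mul]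
    _ = Real.exp (-s / 3) := by
        congr 1
        rw [hx]; field_simp

theorem integral_h_pow_le (d : ℕ) (hd : 1 ≤ d) :
    (∫ s in (0 : ℝ)..(d : ℝ),
        ((1 + Real.exp (-2 * s / d)) * (1 + Real.exp (-2 * ((d : ℝ) - s) / d))
          / (2 * (1 + Real.exp (-2)))) ^ d) ≤ 6 := by
  have hD : (0:ℝ) < d := by exact_mod_cast hd
  set f : ℝ → ℝ := fun s =>
    ((1 + Real.exp (-2 * s / d)) * (1 + Real.exp (-2 * ((d : ℝ) - s) / d))
      / (2 * (1 + Real.exp (-2)))) ^ d with hf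
  set g : ℝ → ℝ := fun s => Real.exp (-s / 3) + Real.exp (-((d : ℝ) - s) / 3) with hg
  have hfc : Continuous f := by
    apply Continuous.pow
    apply Continuous.div_const
    exact ((continuous_const.add ((continuous_const.mul continuous_id').div_const _).rexp).mul
      (continuous_const.add ((continuous_const.mul (continuous_const.sub continuous_id')).div_const _).rexp))
  have hgc : Continuous g := by
    exact (((continuous_id'.neg).div_const _).rexp).add
      (((continuous_const.sub continuous_id').neg.div_const _).rexp)
  have hmono : ∫ s in (0:ℝ)..(d:ℝ), f s ≤ ∫ s in (0:ℝ)..(d:ℝ), g s := by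
    apply intervalIntegral.integral_mono_on hD.le
      (hfc.intervalIntegrable _ _) (hgc.intervalIntegrable _ _)
    intro s hs
    obtain ⟨hs0, hsd⟩ := hs
    by_cases hcase : s ≤ (d : ℝ) / 2
    · have h1 := hbound d hd s hs0 hcase
      have h2 := Real.exp_pos (-((d : ℝ) - s) / 3)
      simp only [hf, hg]
      linarith
    · push_neg at hcase
      have h1 := hbound d hd ((d : ℝ) - s) (by linarith) (by linarith)
      rw [show (d : ℝ) - ((d : ℝ) - s) = s by ring] at h1
      rw [mul_comm (1 + Real.exp (-2 * ((d:ℝ) - s) / d))] at h1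
      have h2 := Real.exp_pos (-s / 3)
      simp only [hf, hg]
      linarith
  have hFder : ∀ s ∈ Set.uIcc (0:ℝ) (d:ℝ),
      HasDerivAt (fun s : ℝ => -3 * Real.exp (-s / 3) + 3 * Real.exp (-((d:ℝ) - s) / 3)) (g s) s := by
    intro s _
    have d1 : HasDerivAt (fun s : ℝ => -s / 3) (-1 / 3) s := by
      simpa using ((hasDerivAt_id s).neg.div_const 3)
    have d2 : HasDerivAt (fun s : ℝ => -((d:ℝ) - s) / 3) (1 / 3) s := by
      have : HasDerivAt (fun s : ℝ => -((d:ℝ) - s)) 1 s := by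
        exact (((hasDerivAt_const s (d:ℝ)).sub (hasDerivAt_id' s)).neg).congr_deriv (by norm_num)
      simpa using this.div_const 3
    have e1 := (Real.hasDerivAt_exp (-s / 3)).comp s d1
    have e2 := (Real.hasDerivAt_exp (-((d:ℝ) - s) / 3)).comp s d2
    have := ((e1.const_mul (-3 : ℝ)).add (e2.const_mul (3 : ℝ)))
    refine this.congr_deriv ?_
    simp only [hg, Function.comp]
    ring
  have hint : ∫ s in (0:ℝ)..(d:ℝ), g s
      = (-3 * Real.exp (-(d:ℝ) / 3) + 3 * Real.exp (-((d:ℝ) - (d:ℝ)) / 3))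
        - (-3 * Real.exp (-(0:ℝ) / 3) + 3 * Real.exp (-((d:ℝ) - 0) / 3)) := by
    exact intervalIntegral.integral_eq_sub_of_hasDerivAt hFder (hgc.intervalIntegrable _ _)
  have hexp := Real.exp_pos (-(d:ℝ) / 3)
  have : ∫ s in (0:ℝ)..(d:ℝ), g s ≤ 6 := by
    rw [hint]
    have e1 : Real.exp (-((d:ℝ) - (d:ℝ)) / 3) = 1 := by
      rw [show -((d:ℝ) - (d:ℝ)) / 3 = 0 by ring, Real.exp_zero]
    have e2 : Real.exp (-(0:ℝ) / 3) = 1 := by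
      rw [show -(0:ℝ) / 3 = 0 by ring, Real.exp_zero]
    have e3 : Real.exp (-((d:ℝ) - 0) / 3) = Real.exp (-(d:ℝ) / 3) := by norm_num
    rw [e1, e2, e3]
    linarith
  linarith
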